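/- Let q ≥ 3, let m ≥ 0 and let t ≥ 2 be an integer with 2t > m. Then every (q−2)-colored Motzkin word γ of length m admits at most one factorization γ = uβv in which u and v are (q−2)-colored Motzkin words and β is an elevated (q−2)-colored Motzkin word of length at least t; i.e., if γ = uβv = u'β'v' are two such factorizations then u = u', β = β' and v = v'. -/
import Mathlib


/-- Value of a letter: 1 ↦ +1, 0 ↦ -1, other letters ↦ 0. -/
def mval (a : ℕ) : ℤ := if a = 1 then 1 else if a = 0 then -1 else 0

/-- Value-sum of a word. -/
def vsum (w : List ℕ) : ℤ := (w.map mval).sum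

/-- A (q-2)-colored Motzkin word over the alphabet Z_q = {0,...,q-1}:
all letters < q, every prefix has nonnegative value-sum, total value-sum 0. -/
def IsMotzkinWord (q : ℕ) (w : List ℕ) : Prop :=
  (∀ a ∈ w, a < q) ∧ (∀ u, u <+: w → 0 ≤ vsum u) ∧ vsum w = 0

/-- The set 𝓜_{q-2}(n) of (q-2)-colored Motzkin words of length n. -/
def MotzkinSet (q n : ℕ) : Set (List ℕ) := {w | w.length = n ∧ IsMotzkinWord q w}

/-- M_{q-2}(n), the number of (q-2)-colored Motzkin words of length n. -/
noncomputable def Mnum (q n : ℕ) : ℕ := (MotzkinSet q n).ncard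

/-- The set Ê_{q-2}(n) of elevated (q-2)-colored Motzkin words of length n:
words 1α0 with α ∈ 𝓜_{q-2}(n-2). -/
def ElevatedSet (q n : ℕ) : Set (List ℕ) :=
  {w | w.length = n ∧ ∃ α ∈ MotzkinSet q (n - 2), w = 1 :: (α ++ [0])}

/-- The set A_q(n). -/
def SetA (q n : ℕ) : Set (List ℕ) :=
  {w | ∃ i ≤ n / 2, ∃ α ∈ MotzkinSet q i, ∃ β ∈ ElevatedSet q (n - i), w = α ++ β} \
    {w | ∃ α ∈ ElevatedSet q (n / 2), ∃ β ∈ ElevatedSet q (n / 2), w = α ++ β}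

/-- The set B_q(n). -/
def SetB (q n : ℕ) : Set (List ℕ) :=
  {w | ∃ i ≤ n / 2 - 1, ∃ α ∈ MotzkinSet q i, ∃ β ∈ ElevatedSet q (n - i - 1),
    w = 1 :: (α ++ β)}

/-- The set C_q(n): words γ0 with γ a (q-2)-colored Motzkin word of length n-1
having no factor which is an elevated Motzkin word of length j ≥ ⌈n/2⌉. -/
def SetC (q n : ℕ) : Set (List ℕ) :=
  {w | ∃ γ ∈ MotzkinSet q (n - 1),
    (∀ j, (n + 1) / 2 ≤ j → ∀ β ∈ ElevatedSet q j, ¬ β <:+: γ) ∧ w = γ ++ [0]}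

/-- The cross-bifix-free candidate set CBFS_q(n). -/
def CBFS (q n : ℕ) : Set (List ℕ) := SetA q n ∪ SetB q n ∪ SetC q n

/-- A word is bifix-free if no nonempty proper prefix of it is also a suffix of it. -/
def BifixFree (w : List ℕ) : Prop :=
  ∀ u, u <+: w → u ≠ [] → u.length < w.length → ¬ u <:+ w

/-- BF_q(n): the set of bifix-free words of length n over Z_q. -/
def BF (q n : ℕ) : Set (List ℕ) := {w | w.length = n ∧ (∀ a ∈ w, a < q) ∧ BifixFree w}

/-- F_{k,q}(n): the number of words of length n over Z_q avoiding k consecutive 0's. -/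
noncomputable def Fcount (k q n : ℕ) : ℕ :=
  {w : List ℕ | w.length = n ∧ (∀ a ∈ w, a < q) ∧ ¬ List.replicate k 0 <:+: w}.ncard

/-- The set S_{k,q}(n) of Bajic--Stojanovic--Chee--Kiah type words: words s of length n
over Z_q with s₁ = ⋯ = s_k = 0, s_{k+1} ≠ 0, s_n ≠ 0, and such that the subword
s_{k+2} ⋯ s_{n-1} contains no k consecutive 0's. -/
def SetS (q k n : ℕ) : Set (List ℕ) :=
  {s | s.length = n ∧ (∀ a ∈ s, a < q) ∧ s.take k = List.replicate k 0 ∧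
    s.getD k 0 ≠ 0 ∧ s.getLast? ≠ some 0 ∧
    ¬ List.replicate k 0 <:+: (s.drop (k + 1)).take (n - k - 2)}

lemma vsum_append (a b : List ℕ) : vsum (a ++ b) = vsum a + vsum b := by
  simp [vsum]

lemma prefix_of_prefix_append {w β v : List ℕ} (h : w <+: β ++ v)
    (hl : w.length ≤ β.length) : w <+: β := by
  rcases List.prefix_or_prefix_of_prefix h (List.prefix_append β v) with h1 | h1
  · exact h1
  · have heq : β = w := h1.eq_of_length (le_antisymm h1.length_le hl)
    exact heq ▸ List.prefix_rfl

lemma elevated_prefix_pos {q : ℕ} {β : List ℕ} (hβ : β ∈ ElevatedSet q β.length)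
    {p : List ℕ} (hp : p <+: β) (hne : p ≠ []) (hlt : p.length < β.length) :
    1 ≤ vsum p := by
  obtain ⟨hlen, α, hα, rfl⟩ := hβ
  cases p with
  | nil => exact absurd rfl hne
  | cons a p2 =>
    obtain ⟨rfl, hp2⟩ : a = 1 ∧ p2 <+: α ++ [0] := by
      rcases hp with ⟨s, hs⟩
      simp only [List.cons_append, List.cons.injEq] at hs
      exact ⟨hs.1, ⟨s, hs.2⟩⟩
    have hl2 : p2.length ≤ α.length := by
      simp at hlt
      omega
    have hp2' : p2 <+: α := prefix_of_prefix_append hp2 hl2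
    have h0 : (0 : ℤ) ≤ vsum p2 := hα.2.2.1 p2 hp2'
    have : vsum (1 :: p2) = 1 + vsum p2 := by simp [vsum, mval]
    omega

lemma elevated_vsum {q : ℕ} {β : List ℕ} (hβ : β ∈ ElevatedSet q β.length) :
    vsum β = 0 := by
  obtain ⟨hlen, α, hα, rfl⟩ := hβ
  have h0 : vsum α = 0 := hα.2.2.2
  have : vsum (1 :: (α ++ [0])) = 1 + (vsum α + (-1)) := by
    show vsum ([1] ++ (α ++ [0])) = _
    rw [vsum_append, vsum_append]; simp [vsum, mval]
  omega

lemma no_strict (q : ℕ) {u β v u' β' v' : List ℕ}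
    (hu : vsum u = 0) (hu' : vsum u' = 0)
    (hβ : β ∈ ElevatedSet q β.length)
    (heq : u ++ (β ++ v) = u' ++ (β' ++ v'))
    (hlt1 : u.length < u'.length) (hlt2 : u'.length < u.length + β.length) :
    False := by
  have hupre : u' <+: u ++ (β ++ v) := heq ▸ List.prefix_append u' (β' ++ v')
  have hule : u <+: u' := by
    have h1 : u <+: u' ++ (β' ++ v') := heq ▸ List.prefix_append u (β ++ v)
    exact prefix_of_prefix_append h1 (le_of_lt hlt1)
  obtain ⟨w, rfl⟩ := hule
  have hwpre : w <+: β ++ v := by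
    obtain ⟨s, hs⟩ := hupre
    rw [List.append_assoc] at hs
    exact ⟨s, List.append_cancel_left hs⟩
  have hwβ : w <+: β := by
    apply prefix_of_prefix_append hwpre
    have := hlt2
    simp only [List.length_append] at this ⊢
    omega
  have hwne : w ≠ [] := by
    intro h
    rw [h] at hlt1
    simp at hlt1
  have hwlt : w.length < β.length := by
    have := hlt2
    simp only [List.length_append] at this hlt1
    omega
  have hpos := elevated_prefix_pos hβ hwβ hwne hwlt
  have hw0 : vsum w = 0 := by
    have := vsum_append u w
    rw [hu'] at this
    omega
  omega

/-- A (q-2)-colored Motzkin word γ of length m < 2t admits at most one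
factorization γ = uβv with u, v (q-2)-colored Motzkin words and β an elevated
(q-2)-colored Motzkin word of length ≥ t (t ≥ 2). -/
theorem unique_long_elevated_factor (q : ℕ) (hq : 3 ≤ q) (m t : ℕ) (ht : 2 ≤ t)
    (htm : m < 2 * t) (γ : List ℕ) (hγ : γ ∈ MotzkinSet q m)
    (u β v u' β' v' : List ℕ)
    (hu : IsMotzkinWord q u) (hv : IsMotzkinWord q v)
    (hu' : IsMotzkinWord q u') (hv' : IsMotzkinWord q v')
    (hβ : β ∈ ElevatedSet q β.length) (hβt : t ≤ β.length)
    (hβ' : β' ∈ ElevatedSet q β'.length) (hβ't : t ≤ β'.length)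
    (h1 : γ = u ++ β ++ v) (h2 : γ = u' ++ β' ++ v') :
    u = u' ∧ β = β' ∧ v = v' := by
  have heq : u ++ (β ++ v) = u' ++ (β' ++ v') := by
    rw [← List.append_assoc, ← List.append_assoc, ← h1, ← h2]
  have hm1 : u.length + β.length + v.length = m := by
    have := hγ.1
    rw [h1] at this
    simp only [List.length_append] at this
    omega
  have hm2 : u'.length + β'.length + v'.length = m := by
    have := hγ.1
    rw [h2] at this
    simp only [List.length_append] at this
    omega
  have hlt2 : u'.length < u.length + β.length := by omega
  have hlt2' : u.length < u'.length + β'.length := by omega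
  have hulen : u.length = u'.length := by
    by_contra h
    rcases lt_or_gt_of_ne h with h | h
    · exact no_strict q hu.2.2 hu'.2.2 hβ heq h hlt2
    · exact no_strict q hu'.2.2 hu.2.2 hβ' heq.symm h hlt2'
  have huu' : u = u' := by
    have h1' : u <+: u' ++ (β' ++ v') := heq ▸ List.prefix_append u (β ++ v)
    have : u <+: u' := prefix_of_prefix_append h1' (le_of_eq hulen)
    exact this.eq_of_length hulen
  subst huu'
  have heq2 : β ++ v = β' ++ v' := (List.append_cancel_left heq)
  have hβlen : β.length = β'.length := by
    by_contra h
    rcases lt_or_gt_of_ne h with h | h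
    · have hβpre : β <+: β' := by
        apply prefix_of_prefix_append (w := β) (β := β') (v := v')
        · exact heq2 ▸ List.prefix_append β v
        · exact le_of_lt h
      have hβne : β ≠ [] := by
        intro hn; rw [hn] at hβt; simp at hβt; omega
      have := elevated_prefix_pos hβ' hβpre hβne h
      have := elevated_vsum hβ
      omega
    · have hβpre : β' <+: β := by
        apply prefix_of_prefix_append (w := β') (β := β) (v := v)
        · exact heq2 ▸ List.prefix_append β' v'
        · exact le_of_lt h
      have hβne : β' ≠ [] := by
        intro hn; rw [hn] at hβ't; simp at hβ't; omega
      have := elevated_prefix_pos hβ hβpre hβne h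
      have := elevated_vsum hβ'
      omega
  have hββ' : β = β' := by
    have hβpre : β <+: β' ++ v' := heq2 ▸ List.prefix_append β v
    exact (prefix_of_prefix_append hβpre (le_of_eq hβlen)).eq_of_length hβlen
  subst hββ'
  exact ⟨rfl, rfl, List.append_cancel_left heq2⟩
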